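/- For every positive integer n and every integer i with 0 ≤ i ≤ n, (2^i·3^{n-i-1} + 3^i)/2^{n+1} ≥ (1.11)^n/6. Equivalently, (1/6)·((3/2)^{n-i} + 3^{i+1}/2^n) ≥ (1.11)^n/6. -/
import Mathlib

private lemma key_ineq (n i : ℕ) (hi : i ≤ n) :
    (1.11 : ℝ) ^ n ≤ (3 / 2 : ℝ) ^ (n - i) + (3 : ℝ) ^ (i + 1) / 2 ^ n := by
  have hki : i + (n - i) = n := Nat.add_sub_cancel' hi
  set k := n - i with hk
  rcases le_or_gt (27 * n) (100 * k) with h | h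
  · -- (3/2)^k ≥ 1.11^n
    have h1 : ((1.11 : ℝ) ^ n) ^ 100 ≤ ((3 / 2 : ℝ) ^ k) ^ 100 := by
      calc ((1.11 : ℝ) ^ n) ^ 100 = ((1.11 : ℝ) ^ 100) ^ n := by
            rw [← pow_mul, ← pow_mul, mul_comm]
        _ ≤ ((3 / 2 : ℝ) ^ 27) ^ n := by
            apply pow_le_pow_left₀ (by positivity)
            norm_num
        _ = (3 / 2 : ℝ) ^ (27 * n) := by rw [← pow_mul]
        _ ≤ (3 / 2 : ℝ) ^ (100 * k) := pow_le_pow_right₀ (by norm_num) h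
        _ = ((3 / 2 : ℝ) ^ k) ^ 100 := by rw [← pow_mul, mul_comm]
    have h2 : (1.11 : ℝ) ^ n ≤ (3 / 2 : ℝ) ^ k :=
      le_of_pow_le_pow_left₀ (by norm_num) (by positivity) h1
    have h3 : (0 : ℝ) ≤ (3 : ℝ) ^ (i + 1) / 2 ^ n := by positivity
    linarith
  · -- 73 * n ≤ 100 * i, so 3^(i+1) ≥ 2.22^n
    have hin : 73 * n ≤ 100 * i := by omega
    have h1 : ((2.22 : ℝ) ^ n) ^ 100 ≤ ((3 : ℝ) ^ (i + 1)) ^ 100 := by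
      calc ((2.22 : ℝ) ^ n) ^ 100 = ((2.22 : ℝ) ^ 100) ^ n := by
            rw [← pow_mul, ← pow_mul, mul_comm]
        _ ≤ ((3 : ℝ) ^ 73) ^ n := by
            apply pow_le_pow_left₀ (by positivity)
            norm_num
        _ = (3 : ℝ) ^ (73 * n) := by rw [← pow_mul]
        _ ≤ (3 : ℝ) ^ (100 * (i + 1)) := by
            apply pow_le_pow_right₀ (by norm_num); omega
        _ = ((3 : ℝ) ^ (i + 1)) ^ 100 := by rw [← pow_mul, mul_comm]
    have h2 : (2.22 : ℝ) ^ n ≤ (3 : ℝ) ^ (i + 1) :=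
      le_of_pow_le_pow_left₀ (by norm_num) (by positivity) h1
    have h3 : (1.11 : ℝ) ^ n ≤ (3 : ℝ) ^ (i + 1) / 2 ^ n := by
      rw [le_div_iff₀ (by positivity)]
      calc (1.11 : ℝ) ^ n * 2 ^ n = (2.22 : ℝ) ^ n := by
            rw [← mul_pow]; norm_num
        _ ≤ (3 : ℝ) ^ (i + 1) := h2
    have h4 : (0 : ℝ) ≤ (3 / 2 : ℝ) ^ k := by positivity
    linarith

theorem min_prophet_ratio_bound (n i : ℕ) (hn : 1 ≤ n) (hi : i ≤ n) :
    ((2 : ℝ) ^ i * (3 : ℝ) ^ ((n : ℤ) - i - 1) + 3 ^ i) / 2 ^ (n + 1)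
      ≥ (1.11 : ℝ) ^ n / 6 ∧
    (1 / 6 : ℝ) * ((3 / 2 : ℝ) ^ (n - i) + (3 : ℝ) ^ (i + 1) / 2 ^ n)
      ≥ (1.11 : ℝ) ^ n / 6 := by
  have hkey := key_ineq n i hi
  have hki : i + (n - i) = n := Nat.add_sub_cancel' hi
  have heq : ((2 : ℝ) ^ i * (3 : ℝ) ^ ((n : ℤ) - i - 1) + 3 ^ i) / 2 ^ (n + 1)
      = (1 / 6 : ℝ) * ((3 / 2 : ℝ) ^ (n - i) + (3 : ℝ) ^ (i + 1) / 2 ^ n) := by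
    have hz : ((n : ℤ) - i - 1) = ((n - i : ℕ) : ℤ) - 1 := by
      push_cast [hki]; omega
    rw [hz, zpow_sub₀ (by norm_num : (3:ℝ) ≠ 0), zpow_natCast, zpow_one]
    have h2n : (2 : ℝ) ^ n = 2 ^ i * 2 ^ (n - i) := by
      rw [← pow_add, hki]
    rw [div_pow, pow_succ, pow_succ, h2n]
    field_simp
    ring
  constructor
  · rw [heq]; linarith
  · linarith
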